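/- For n > 0, the partition function Z(n) = ∫_{ℝ²} exp(-n·w1^2·w2^2)·(1/(2π))·exp(-(w1^2+w2^2)/2) dw1 dw2 satisfies Z(n)·n^{1/2}/log n → 1/(2√π) as n → ∞. -/

import Mathlib

open Real MeasureTheory Filter Set

/-- Partition function for `f(w1,w2) = w1^2 w2^2`. -/
noncomputable def Za (n : ℝ) : ℝ :=
  ∫ w1 : ℝ, ∫ w2 : ℝ,
    Real.exp (-(n * (w1 ^ 2 * w2 ^ 2))) *
      (1 / (2 * π) * Real.exp (-(w1 ^ 2 + w2 ^ 2) / 2))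

noncomputable def Fk (n u : ℝ) : ℝ := Real.exp (-(u^2/(2*n))) / Real.sqrt (u^2 + 1/2)

noncomputable def Hh (n : ℝ) : ℝ := ∫ u : ℝ, Fk n u




lemma cont_Fk (n : ℝ) : Continuous (Fk n) := by
  unfold Fk
  apply Continuous.div (by continuity) (by continuity)
  intro u
  positivity

lemma Fk_nonneg (n u : ℝ) : 0 ≤ Fk n u := by unfold Fk; positivity

lemma sqrt_half_le (u : ℝ) : Real.sqrt (1/2) ≤ Real.sqrt (u^2 + 1/2) :=
  Real.sqrt_le_sqrt (by nlinarith [sq_nonneg u])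

lemma integrable_Fk {n : ℝ} (hn : 0 < n) : Integrable (Fk n) := by
  have h := (integrable_exp_neg_mul_sq (show (0:ℝ) < (2*n)⁻¹ by positivity)).const_mul (Real.sqrt 2)
  apply h.mono' (cont_Fk n).aestronglyMeasurable
  filter_upwards with u
  rw [Real.norm_eq_abs, abs_of_nonneg (Fk_nonneg n u)]
  unfold Fk
  have h1 : Real.sqrt (1/2) ≤ Real.sqrt (u^2 + 1/2) := sqrt_half_le u
  have h2 : (0:ℝ) < Real.sqrt (1/2) := by positivity
  have h3 : Real.exp (-(u ^ 2 / (2 * n))) = Real.exp (-(2*n)⁻¹ * u^2) := by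
    congr 1; ring
  rw [h3, div_le_iff₀ (lt_of_lt_of_le h2 h1)]
  have h4 : (1:ℝ) ≤ Real.sqrt 2 * Real.sqrt (1/2) := by
    rw [← Real.sqrt_mul (by norm_num)]
    norm_num
  calc Real.exp (-(2*n)⁻¹ * u^2) = Real.exp (-(2*n)⁻¹ * u^2) * 1 := by ring
    _ ≤ Real.exp (-(2*n)⁻¹ * u^2) * (Real.sqrt 2 * Real.sqrt (1/2)) :=
        mul_le_mul_of_nonneg_left h4 (Real.exp_nonneg _)
    _ ≤ Real.exp (-(2*n)⁻¹ * u^2) * (Real.sqrt 2 * Real.sqrt (u^2+1/2)) :=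
        mul_le_mul_of_nonneg_left
          (mul_le_mul_of_nonneg_left h1 (Real.sqrt_nonneg 2)) (Real.exp_nonneg _)
    _ = Real.sqrt 2 * Real.exp (-(2*n)⁻¹ * u^2) * Real.sqrt (u^2+1/2) := by ring

lemma cont_p : Continuous (fun u : ℝ => (Real.sqrt (u^2 + 1/2))⁻¹) := by
  apply Continuous.inv₀ (by continuity)
  intro u; positivity

lemma integral_p (a : ℝ) :
    ∫ u in (-a)..a, (Real.sqrt (u^2 + 1/2))⁻¹ = 2 * Real.arsinh (Real.sqrt 2 * a) := by
  have hd : ∀ u ∈ Set.uIcc (-a) a,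
      HasDerivAt (fun v => Real.arsinh (Real.sqrt 2 * v)) ((Real.sqrt (u^2 + 1/2))⁻¹) u := by
    intro u _
    have h := (Real.hasDerivAt_arsinh (Real.sqrt 2 * u)).comp u
      ((hasDerivAt_id u).const_mul (Real.sqrt 2))
    refine h.congr_deriv ?_
    symm
    have e1 : 1 + (Real.sqrt 2 * u)^2 = 2 * (u^2 + 1/2) := by
      rw [mul_pow, Real.sq_sqrt (by norm_num : (0:ℝ) ≤ 2)]
      ring
    rw [e1, Real.sqrt_mul (by norm_num : (0:ℝ) ≤ 2)]
    have h2 : (0:ℝ) < Real.sqrt 2 := by positivity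
    have h3 : (0:ℝ) < Real.sqrt (u^2 + 1/2) := by positivity
    field_simp
  rw [intervalIntegral.integral_eq_sub_of_hasDerivAt hd (cont_p.intervalIntegrable _ _)]
  rw [mul_neg, Real.arsinh_neg]
  ring



lemma Za_eq {n : ℝ} (hn : 0 < n) :
    Za n = (2 * Real.sqrt π)⁻¹ * ((Real.sqrt n)⁻¹ * Hh n) := by
  have hπ : (0:ℝ) < π := pi_pos
  have hsπ : Real.sqrt π ≠ 0 := by positivity
  have h1 : Za n = ∫ x : ℝ, 1/(2*π) * Real.exp (-(x^2)/2) * Real.sqrt (π / (n*x^2 + 1/2)) := by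
    unfold Za
    congr 1; funext x
    have hpt : ∀ w2 : ℝ, Real.exp (-(n*(x^2*w2^2))) * (1/(2*π) * Real.exp (-(x^2+w2^2)/2))
        = 1/(2*π) * Real.exp (-(x^2)/2) * Real.exp (-(n*x^2+1/2) * w2^2) := by
      intro w2
      rw [mul_left_comm, ← Real.exp_add, mul_assoc, ← Real.exp_add]
      congr 1
      ring_nf
    simp only [hpt]
    rw [integral_const_mul, integral_gaussian]
  have h2 : ∀ x : ℝ, 1/(2*π) * Real.exp (-(x^2)/2) * Real.sqrt (π / (n*x^2 + 1/2))
      = (2*Real.sqrt π)⁻¹ * Fk n (Real.sqrt n * x) := by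
    intro x
    rw [Real.sqrt_div hπ.le]
    unfold Fk
    have e1 : (Real.sqrt n * x)^2 = n * x^2 := by
      rw [mul_pow, Real.sq_sqrt hn.le]
    rw [e1]
    have e2 : n * x^2 / (2*n) = x^2/2 := by
      field_simp
    rw [e2]
    have e3 : -(x^2/2) = -(x^2)/2 := by ring
    rw [e3]
    have hππ : π = Real.sqrt π * Real.sqrt π := (Real.mul_self_sqrt hπ.le).symm
    field_simp
    ring_nf
    rw [Real.sq_sqrt hπ.le]
  rw [h1]
  simp only [h2]
  rw [integral_const_mul, Measure.integral_comp_mul_left (Fk n) (Real.sqrt n),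
    abs_of_pos (inv_pos.mpr (Real.sqrt_pos.mpr hn)), smul_eq_mul]
  rfl


lemma setIntegral_p {a : ℝ} (ha : 0 ≤ a) :
    ∫ u in Icc (-a) a, (Real.sqrt (u^2 + 1/2))⁻¹ = 2 * Real.arsinh (Real.sqrt 2 * a) := by
  rw [integral_Icc_eq_integral_Ioc, ← intervalIntegral.integral_of_le (by linarith : -a ≤ a),
    integral_p]

lemma Hh_lower {n A : ℝ} (hn : 0 < n) (hA : 0 < A) :
    Real.exp (-(A^2/2)) * (2 * Real.arsinh (Real.sqrt 2 * (A * Real.sqrt n))) ≤ Hh n := by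
  set a := A * Real.sqrt n with ha_def
  have hsn : 0 < Real.sqrt n := Real.sqrt_pos.mpr hn
  have ha : 0 < a := by positivity
  have step1 : ∫ u in Icc (-a) a, Fk n u ≤ Hh n :=
    setIntegral_le_integral (integrable_Fk hn) (ae_of_all _ (Fk_nonneg n))
  have step2 : ∫ u in Icc (-a) a, Real.exp (-(A^2/2)) * (Real.sqrt (u^2 + 1/2))⁻¹
      ≤ ∫ u in Icc (-a) a, Fk n u := by
    apply setIntegral_mono_on
    · exact ((continuous_const.mul cont_p).integrableOn_Icc)
    · exact (integrable_Fk hn).integrableOn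
    · exact measurableSet_Icc
    · intro u hu
      rw [mem_Icc] at hu
      have hu2 : u^2 ≤ A^2 * n := by
        have : u^2 ≤ a^2 := sq_le_sq' hu.1 hu.2
        calc u^2 ≤ a^2 := this
          _ = A^2 * n := by rw [ha_def, mul_pow, Real.sq_sqrt hn.le]
      have hexp : Real.exp (-(A^2/2)) ≤ Real.exp (-(u^2/(2*n))) := by
        apply Real.exp_le_exp.mpr
        have : u^2/(2*n) ≤ A^2/2 := by
          rw [div_le_div_iff₀ (by positivity) (by positivity)]
          nlinarith
        linarith
      calc Real.exp (-(A^2/2)) * (Real.sqrt (u^2 + 1/2))⁻¹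
          ≤ Real.exp (-(u^2/(2*n))) * (Real.sqrt (u^2 + 1/2))⁻¹ :=
            mul_le_mul_of_nonneg_right hexp (by positivity)
        _ = Fk n u := (div_eq_mul_inv _ _).symm
  have step3 : ∫ u in Icc (-a) a, Real.exp (-(A^2/2)) * (Real.sqrt (u^2 + 1/2))⁻¹
      = Real.exp (-(A^2/2)) * (2 * Real.arsinh (Real.sqrt 2 * a)) := by
    rw [integral_const_mul, setIntegral_p ha.le]
  linarith

lemma tail_bound {n : ℝ} (hn : 1 ≤ n) :
    ∫ u in Ioi (Real.sqrt n), Fk n u ≤ 1 := by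
  have hn0 : 0 < n := by linarith
  have hs1 : 1 ≤ Real.sqrt n := by
    rw [show (1:ℝ) = Real.sqrt 1 by simp]
    exact Real.sqrt_le_sqrt hn
  have hs0 : 0 < Real.sqrt n := by linarith
  have hint : IntegrableOn (fun u : ℝ => 2*n * u^(-3:ℝ)) (Ioi (Real.sqrt n)) :=
    (integrableOn_Ioi_rpow_of_lt (by norm_num) hs0).const_mul (2*n)
  have step : ∫ u in Ioi (Real.sqrt n), Fk n u ≤ ∫ u in Ioi (Real.sqrt n), 2*n * u^(-3:ℝ) := by
    apply setIntegral_mono_on (integrable_Fk hn0).integrableOn hint measurableSet_Ioi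
    intro u hu
    rw [mem_Ioi] at hu
    have hu0 : 0 < u := lt_trans hs0 hu
    have hu1 : 1 ≤ u := le_trans hs1 hu.le
    have hx : 0 < u^2/(2*n) := by positivity
    have hA : Real.exp (-(u^2/(2*n))) ≤ 2*n/u^2 := by
      rw [Real.exp_neg]
      rw [show 2*n/u^2 = (u^2/(2*n))⁻¹ by rw [inv_div]]
      apply inv_anti₀ hx
      have := Real.add_one_le_exp (u^2/(2*n))
      linarith
    have hB : (Real.sqrt (u^2 + 1/2))⁻¹ ≤ u⁻¹ := by
      apply inv_anti₀ hu0
      calc u = Real.sqrt (u^2) := by rw [Real.sqrt_sq hu0.le]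
        _ ≤ Real.sqrt (u^2 + 1/2) := Real.sqrt_le_sqrt (by linarith)
    calc Fk n u = Real.exp (-(u^2/(2*n))) * (Real.sqrt (u^2 + 1/2))⁻¹ := div_eq_mul_inv _ _
      _ ≤ (2*n/u^2) * u⁻¹ := by
          apply mul_le_mul hA hB (by positivity) (by positivity)
      _ = 2*n * u^(-3:ℝ) := by
          rw [Real.rpow_neg hu0.le, show (3:ℝ) = ((3:ℕ):ℝ) by norm_num, Real.rpow_natCast]
          field_simp
  have hval : ∫ u in Ioi (Real.sqrt n), 2*n * u^(-3:ℝ) = 1 := by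
    rw [integral_const_mul, integral_Ioi_rpow_of_lt (by norm_num) hs0]
    have : Real.sqrt n ^ ((-3:ℝ) + 1) = n⁻¹ := by
      rw [show (-3:ℝ) + 1 = -2 by norm_num, Real.rpow_neg hs0.le,
        show (2:ℝ) = ((2:ℕ):ℝ) by norm_num, Real.rpow_natCast, Real.sq_sqrt hn0.le]
    rw [this]
    field_simp
    ring
  rw [hval] at step
  exact step

lemma Hh_upper {n : ℝ} (hn : 1 ≤ n) :
    Hh n ≤ 2 * Real.arsinh (Real.sqrt 2 * Real.sqrt n) + 2 := by
  have hn0 : 0 < n := by linarith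
  have hs1 : 1 ≤ Real.sqrt n := by
    rw [show (1:ℝ) = Real.sqrt 1 by simp]
    exact Real.sqrt_le_sqrt hn
  have hs0 : 0 < Real.sqrt n := by linarith
  set s := Real.sqrt n with hs_def
  have hsplit : Hh n = (∫ u in Icc (-s) s, Fk n u) + ∫ u in (Icc (-s) s)ᶜ, Fk n u :=
    (integral_add_compl measurableSet_Icc (integrable_Fk hn0)).symm
  have part1 : ∫ u in Icc (-s) s, Fk n u ≤ 2 * Real.arsinh (Real.sqrt 2 * s) := by
    rw [← setIntegral_p (by linarith : (0:ℝ) ≤ s)]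
    apply setIntegral_mono_on (integrable_Fk hn0).integrableOn
      cont_p.integrableOn_Icc measurableSet_Icc
    intro u _
    calc Fk n u = Real.exp (-(u^2/(2*n))) * (Real.sqrt (u^2 + 1/2))⁻¹ := div_eq_mul_inv _ _
      _ ≤ 1 * (Real.sqrt (u^2 + 1/2))⁻¹ := by
          apply mul_le_mul_of_nonneg_right _ (by positivity)
          rw [Real.exp_le_one_iff]
          have : (0:ℝ) ≤ u^2/(2*n) := by positivity
          linarith
      _ = (Real.sqrt (u^2 + 1/2))⁻¹ := one_mul _
  have part2 : ∫ u in (Icc (-s) s)ᶜ, Fk n u ≤ 2 := by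
    have hsub : (Icc (-s) s)ᶜ ⊆ Iic (-s) ∪ Ioi s := by
      intro x hx
      simp only [mem_compl_iff, mem_Icc, not_and_or, not_le] at hx
      rcases hx with h | h
      · exact Or.inl (le_of_lt h)
      · exact Or.inr h
    have hmono : ∫ u in (Icc (-s) s)ᶜ, Fk n u ≤ ∫ u in Iic (-s) ∪ Ioi s, Fk n u := by
      apply setIntegral_mono_set (integrable_Fk hn0).integrableOn
        (ae_of_all _ (Fk_nonneg n)) (HasSubset.Subset.eventuallyLE hsub)
    have hunion : ∫ u in Iic (-s) ∪ Ioi s, Fk n u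
        = (∫ u in Iic (-s), Fk n u) + ∫ u in Ioi s, Fk n u :=
      setIntegral_union (Iic_disjoint_Ioi (by linarith)) measurableSet_Ioi
        (integrable_Fk hn0).integrableOn (integrable_Fk hn0).integrableOn
    have hrefl : ∫ u in Iic (-s), Fk n u = ∫ u in Ioi s, Fk n u := by
      rw [← integral_comp_neg_Ioi]
      congr 1
      funext u
      simp only [Fk, neg_sq]
    have htail := tail_bound hn
    rw [hunion, hrefl] at hmono
    rw [hs_def] at *
    linarith
  linarith [part1, part2, hsplit.le, hsplit.ge]


lemma log_le_arsinh {a : ℝ} (ha : 0 < a) : Real.log a ≤ Real.arsinh (Real.sqrt 2 * a) := by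
  rw [Real.arsinh]
  apply Real.log_le_log ha
  have h1 : (1:ℝ) ≤ Real.sqrt 2 := by
    rw [show (1:ℝ) = Real.sqrt 1 by simp]
    exact Real.sqrt_le_sqrt (by norm_num)
  nlinarith [Real.sqrt_nonneg (1 + (Real.sqrt 2 * a)^2)]

lemma arsinh_le_log {x : ℝ} (hx : 0 ≤ x) : Real.arsinh x ≤ Real.log (2*x+1) := by
  rw [Real.arsinh]
  apply Real.log_le_log (by positivity)
  have h1 : Real.sqrt (1 + x^2) ≤ 1 + x := by
    rw [show (1:ℝ) + x = Real.sqrt ((1+x)^2) by rw [Real.sqrt_sq (by linarith)]]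
    exact Real.sqrt_le_sqrt (by nlinarith)
  linarith

lemma key : Tendsto (fun n : ℝ => Hh n / Real.log n) atTop (nhds 1) := by
  have hlog : Tendsto Real.log atTop atTop := Real.tendsto_log_atTop
  have hy : Tendsto (fun n : ℝ => Real.log (Real.log n) / Real.log n) atTop (nhds 0) := by
    have h := Real.isLittleO_log_id_atTop.tendsto_div_nhds_zero
    exact (h.comp hlog).congr (fun n => rfl)
  have hx : Tendsto (fun n : ℝ => ((Real.log n)⁻¹)^2) atTop (nhds 0) := by
    have h := (tendsto_inv_atTop_zero.comp hlog).pow 2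
    simpa using h
  -- lower and upper bound functions
  set g : ℝ → ℝ := fun n =>
    Real.exp (-(((Real.log n)⁻¹)^2/2)) * (2 * ((1/2) * Real.log n - Real.log (Real.log n)))
      / Real.log n with hg_def
  set h : ℝ → ℝ := fun n =>
    (2 * (Real.log 4 + (1/2) * Real.log n) + 2) / Real.log n with hh_def
  have hglim : Tendsto g atTop (nhds 1) := by
    have h1 : Tendsto (fun n : ℝ => Real.exp (-(((Real.log n)⁻¹)^2/2))) atTop (nhds 1) := by
      have := Real.continuous_exp.continuousAt.tendsto.comp
        (((hx.div_const 2).neg) : Tendsto (fun n : ℝ => -(((Real.log n)⁻¹)^2/2)) atTop (nhds (-(0/2))))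
      simpa [Function.comp_def] using this
    have h2 : Tendsto (fun n : ℝ => 1 - 2 * (Real.log (Real.log n) / Real.log n)) atTop (nhds 1) := by
      have := (tendsto_const_nhds : Tendsto (fun _ : ℝ => (1:ℝ)) atTop (nhds 1)).sub
        (hy.const_mul 2)
      simpa using this
    have hev : ∀ᶠ n : ℝ in atTop, Real.exp (-(((Real.log n)⁻¹)^2/2))
        * (1 - 2 * (Real.log (Real.log n) / Real.log n)) = g n := by
      filter_upwards [eventually_gt_atTop (1:ℝ)] with n hn
      have hL : Real.log n ≠ 0 := ne_of_gt (Real.log_pos hn)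
      rw [hg_def]
      field_simp
    have := h1.mul h2
    rw [show (1:ℝ) * 1 = 1 by norm_num] at this
    exact this.congr' hev
  have hhlim : Tendsto h atTop (nhds 1) := by
    have h1 : Tendsto (fun n : ℝ => 1 + (2 * Real.log 4 + 2) / Real.log n) atTop (nhds 1) := by
      have := (tendsto_const_nhds : Tendsto (fun _ : ℝ => (1:ℝ)) atTop (nhds 1)).add
        ((tendsto_const_nhds (x := 2 * Real.log 4 + 2)).div_atTop hlog)
      simpa using this
    apply h1.congr'
    filter_upwards [eventually_gt_atTop (1:ℝ)] with n hn
    have hL : Real.log n ≠ 0 := ne_of_gt (Real.log_pos hn)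
    rw [hh_def]
    field_simp
    ring
  apply tendsto_of_tendsto_of_tendsto_of_le_of_le' hglim hhlim
  · -- lower
    filter_upwards [eventually_gt_atTop (1:ℝ)] with n hn
    have hL : 0 < Real.log n := Real.log_pos hn
    have hn0 : (0:ℝ) < n := by linarith
    have hsn : 0 < Real.sqrt n := Real.sqrt_pos.mpr hn0
    set A : ℝ := (Real.log n)⁻¹ with hA_def
    have hA : 0 < A := inv_pos.mpr hL
    have hlow := Hh_lower hn0 hA
    have hlog_a : Real.log (A * Real.sqrt n) = (1/2) * Real.log n - Real.log (Real.log n) := by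
      rw [Real.log_mul (ne_of_gt hA) (ne_of_gt hsn), Real.log_sqrt hn0.le, hA_def,
        Real.log_inv]
      ring
    have harsinh : Real.log (A * Real.sqrt n) ≤ Real.arsinh (Real.sqrt 2 * (A * Real.sqrt n)) :=
      log_le_arsinh (by positivity)
    have hchain : Real.exp (-(A^2/2)) * (2 * ((1/2) * Real.log n - Real.log (Real.log n)))
        ≤ Hh n := by
      calc Real.exp (-(A^2/2)) * (2 * ((1/2) * Real.log n - Real.log (Real.log n)))
          = Real.exp (-(A^2/2)) * (2 * Real.log (A * Real.sqrt n)) := by rw [hlog_a]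
        _ ≤ Real.exp (-(A^2/2)) * (2 * Real.arsinh (Real.sqrt 2 * (A * Real.sqrt n))) := by
            apply mul_le_mul_of_nonneg_left (by linarith) (Real.exp_nonneg _)
        _ ≤ Hh n := hlow
    simp only [hg_def]
    exact div_le_div_of_nonneg_right hchain hL.le
  · -- upper
    filter_upwards [eventually_gt_atTop (1:ℝ)] with n hn
    have hL : 0 < Real.log n := Real.log_pos hn
    have hn1 : (1:ℝ) ≤ n := hn.le
    have hn0 : (0:ℝ) < n := by linarith
    have hs1 : 1 ≤ Real.sqrt n := by
      rw [show (1:ℝ) = Real.sqrt 1 by simp]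
      exact Real.sqrt_le_sqrt hn1
    have hup := Hh_upper hn1
    have h2 : Real.arsinh (Real.sqrt 2 * Real.sqrt n) ≤ Real.log (4 * Real.sqrt n) := by
      calc Real.arsinh (Real.sqrt 2 * Real.sqrt n)
          ≤ Real.log (2 * (Real.sqrt 2 * Real.sqrt n) + 1) := arsinh_le_log (by positivity)
        _ ≤ Real.log (4 * Real.sqrt n) := by
            apply Real.log_le_log (by positivity)
            nlinarith [Real.sq_sqrt (show (0:ℝ) ≤ 2 by norm_num), Real.sqrt_nonneg 2]
    have h3 : Real.log (4 * Real.sqrt n) = Real.log 4 + (1/2) * Real.log n := by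
      rw [Real.log_mul (by norm_num) (by positivity), Real.log_sqrt hn0.le]
      ring
    simp only [hh_def]
    rw [h3] at h2
    exact div_le_div_of_nonneg_right (by linarith) hL.le

/-- `Z(n)·n^(1/2)/log n → 1/(2√π)` as `n → ∞`. -/
theorem Za_asymptotic :
    Tendsto (fun n : ℝ => Za n * n ^ (1/2 : ℝ) / Real.log n) atTop
      (nhds (1 / (2 * Real.sqrt π))) := by
  have hk := key.const_mul ((2 * Real.sqrt π)⁻¹)
  rw [mul_one] at hk
  have hval : (2 * Real.sqrt π)⁻¹ = 1 / (2 * Real.sqrt π) := (one_div _).symm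
  rw [hval] at hk
  apply hk.congr'
  filter_upwards [eventually_gt_atTop (1:ℝ)] with n hn
  have hn0 : (0:ℝ) < n := by linarith
  have hsn : 0 < Real.sqrt n := Real.sqrt_pos.mpr hn0
  rw [Za_eq hn0, ← Real.sqrt_eq_rpow]
  rw [← mul_div_assoc]
  congr 1
  field_simp
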